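/- Let r > 0, q > 0 and 0 < X₁ < X₂ ≤ X₃ < X₄ with −X₄ + X₃ + X₂ − X₁ > 0 and r(X₃ + X₂ − X₁) ≥ qX₄. Define f(S) = 0 for S < X₁; f(S) = qS − rX₁ for X₁ < S < X₂; f(S) = r(X₂ − X₁) for X₂ ≤ S ≤ X₃ (interior values); f(S) = r(X₃ + X₂ − X₁) − qS for X₃ < S < X₄; f(S) = r(−X₄ + X₃ + X₂ − X₁) for S > X₄ (with the stated averaged values at the breakpoints S ∈ {X₁, X₂, X₃, X₄}). Then the boundary in (0,∞) of {S : f(S) > 0} is the singleton {min(max(X₁, (r/q)·X₁), X₂)}. -/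

import Mathlib

/-- Condor spread, first case: if `−X₄+X₃+X₂−X₁ > 0` and `r(X₃+X₂−X₁) ≥ qX₄`, the boundary
in `(0,∞)` of the positivity set of the bonus function is `{min(max(X₁,(r/q)X₁), X₂)}`. -/
theorem stmt_7 (r q X₁ X₂ X₃ X₄ : ℝ) (hr : 0 < r) (hq : 0 < q)
    (h1 : 0 < X₁) (h12 : X₁ < X₂) (h23 : X₂ ≤ X₃) (h34 : X₃ < X₄)
    (hcase1 : 0 < -X₄ + X₃ + X₂ - X₁) (hcase2 : r * (X₃ + X₂ - X₁) ≥ q * X₄)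
    (f : ℝ → ℝ)
    (h0 : ∀ S : ℝ, S < X₁ → f S = 0)
    (hb1 : f X₁ = (X₁ / 2) * (q - r))
    (hs1 : ∀ S : ℝ, X₁ < S → S < X₂ → f S = q * S - r * X₁)
    (hb2 : X₂ < X₃ → f X₂ = (X₂ / 2) * (q + r) - r * X₁)
    (hs2 : ∀ S : ℝ, X₂ < S → S < X₃ → f S = r * (X₂ - X₁))
    (hb23 : X₂ = X₃ → f X₂ = r * (X₂ - X₁))
    (hb3 : X₂ < X₃ → f X₃ = (X₃ / 2) * (r - q) + r * (X₂ - X₁))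
    (hs3 : ∀ S : ℝ, X₃ < S → S < X₄ → f S = r * (X₃ + X₂ - X₁) - q * S)
    (hb4 : f X₄ = r * (X₃ + X₂ - X₁) - (X₄ / 2) * (q + r))
    (hs4 : ∀ S : ℝ, X₄ < S → f S = r * (-X₄ + X₃ + X₂ - X₁)) :
    frontier {S : Set.Ioi (0 : ℝ) | 0 < f S} =
      {S : Set.Ioi (0 : ℝ) | (S : ℝ) = min (max X₁ (r / q * X₁)) X₂} := by
  have hc : q * (r / q * X₁) = r * X₁ := by field_simp
  set c : ℝ := r / q * X₁ with hcdef
  set b : ℝ := min (max X₁ c) X₂ with hb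
  have hbX₁ : X₁ ≤ b := le_min (le_max_left _ _) h12.le
  have hbX₂ : b ≤ X₂ := min_le_right _ _
  have hbmax : b ≤ max X₁ c := min_le_left _ _
  -- positivity above b
  have pos : ∀ x : ℝ, b < x → 0 < f x := by
    intro x hx
    rcases lt_trichotomy x X₂ with hx2 | hx2 | hx2
    · -- X₁ ≤ b < x < X₂
      have hx1 : X₁ < x := lt_of_le_of_lt hbX₁ hx
      rw [hs1 x hx1 hx2]
      have hcb : c ≤ b := by
        rcases min_cases (max X₁ c) X₂ with ⟨h, _⟩ | ⟨h, h'⟩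
        · rw [hb, h]; exact le_max_right _ _
        · exfalso; rw [hb, h] at hx; linarith
      have : c < x := lt_of_le_of_lt hcb hx
      nlinarith
    · -- x = X₂
      rw [hx2] at hx ⊢
      rcases eq_or_lt_of_le h23 with he | hlt
      · rw [hb23 he]; nlinarith
      · rw [hb2 hlt]
        have hcb : c ≤ b := by
          rcases min_cases (max X₁ c) X₂ with ⟨h, _⟩ | ⟨h, h'⟩
          · rw [hb, h]; exact le_max_right _ _
          · exfalso; rw [hb, h] at hx; linarith
        have h2 : c < X₂ := lt_of_le_of_lt hcb hx
        nlinarith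
    · rcases lt_trichotomy x X₃ with hx3 | hx3 | hx3
      · rw [hs2 x hx2 hx3]; nlinarith
      · rw [hx3] at hx2 ⊢
        rw [hb3 hx2]
        nlinarith
      · rcases lt_trichotomy x X₄ with hx4 | hx4 | hx4
        · rw [hs3 x hx3 hx4]; nlinarith
        · rw [hx4]; rw [hb4]; nlinarith
        · rw [hs4 x hx4]; nlinarith
  -- nonpositivity below b
  have nonpos : ∀ x : ℝ, x < b → f x ≤ 0 := by
    intro x hx
    rcases lt_trichotomy x X₁ with hx1 | hx1 | hx1
    · rw [h0 x hx1]
    · rw [hx1] at hx ⊢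
      rw [hb1]
      have hX₁c : X₁ < c := by
        by_contra h
        push_neg at h
        have : max X₁ c = X₁ := max_eq_left h
        rw [this] at hbmax
        linarith
      have hrq : q < r := by nlinarith
      nlinarith
    · -- X₁ < x < b ≤ X₂
      have hx2 : x < X₂ := lt_of_lt_of_le hx hbX₂
      rw [hs1 x hx1 hx2]
      have hble : b ≤ c := by
        rcases max_cases X₁ c with ⟨h, _⟩ | ⟨h, _⟩
        · exfalso; rw [h] at hbmax; linarith
        · rw [h] at hbmax; exact hbmax
      have : x < c := lt_of_lt_of_le hx hble
      nlinarith
  -- the positivity set in ℝ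
  have hsub1 : Set.Ioi b ⊆ {x : ℝ | 0 < f x} := fun x hx => pos x hx
  have hsub2 : {x : ℝ | 0 < f x} ⊆ Set.Ici b := by
    intro x hx
    by_contra h
    simp only [Set.mem_Ici, not_le] at h
    exact absurd hx (not_lt.mpr (nonpos x h))
  have hfront : frontier {x : ℝ | 0 < f x} = {b} := by
    have hcl : closure {x : ℝ | 0 < f x} = Set.Ici b := by
      apply le_antisymm
      · exact closure_minimal hsub2 isClosed_Ici
      · rw [← closure_Ioi]
        exact closure_mono hsub1
    have hint : interior {x : ℝ | 0 < f x} = Set.Ioi b := by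
      apply le_antisymm
      · calc interior {x : ℝ | 0 < f x} ⊆ interior (Set.Ici b) :=
              interior_mono hsub2
          _ = Set.Ioi b := interior_Ici
      · exact isOpen_Ioi.subset_interior_iff.mpr hsub1
    rw [frontier, hcl, hint, Set.Ici_sdiff_Ioi, Set.Icc_self]
  have key : {S : Set.Ioi (0 : ℝ) | 0 < f S} =
      (Subtype.val : Set.Ioi (0:ℝ) → ℝ) ⁻¹' {x : ℝ | 0 < f x} := rfl
  rw [key, ← (isOpen_Ioi : IsOpen (Set.Ioi (0:ℝ))).isOpenMap_subtype_val.preimage_frontier_eq_frontier_preimage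
      continuous_subtype_val, hfront]
  ext S
  simp [eq_comm]
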